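/- Let L > m > 0 and ω > 0, and define f : ℝ → ℝ by f(x) = ((L−m)/4)( ((L+m)/(L−m)) x² + (2/ω²) sin(ωx) − (2/ω) x cos(ωx) ). Then f is differentiable with f′(x) = ((L+m)/2) x + ((L−m)/2) x sin(ωx), f attains its global minimum at x* = 0, and f satisfies the sector condition (m x − f′(x))(L x − f′(x)) ≤ 0 for all x ∈ ℝ; hence f belongs to the class F¹_{m,L} (and f is not convex when L > m). -/

import Mathlib

open Real

/-- The function `f(x) = ((L−m)/4)( ((L+m)/(L−m))x² + (2/ω²)sin(ωx)
− (2/ω)x cos(ωx) )` is differentiable with derivative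
`f′(x) = ((L+m)/2)x + ((L−m)/2)x sin(ωx)`, attains its global minimum at
`x* = 0`, satisfies the sector condition `(mx − f′(x))(Lx − f′(x)) ≤ 0` for
all `x` (so `f ∈ F¹_{m,L}`), and is not convex. -/
theorem sector_bounded_nonconvex_example (m L ω : ℝ)
    (hm : 0 < m) (hmL : m < L) (hω : 0 < ω)
    (f : ℝ → ℝ)
    (hf : ∀ x : ℝ, f x = (L - m) / 4 *
      ((L + m) / (L - m) * x ^ 2 + 2 / ω ^ 2 * Real.sin (ω * x) -
        2 / ω * x * Real.cos (ω * x))) :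
    Differentiable ℝ f ∧
    (∀ x : ℝ, deriv f x = (L + m) / 2 * x + (L - m) / 2 * x * Real.sin (ω * x)) ∧
    (∀ x : ℝ, f 0 ≤ f x) ∧
    (∀ x : ℝ, (m * x - deriv f x) * (L * x - deriv f x) ≤ 0) ∧
    ¬ConvexOn ℝ Set.univ f := by
  have hLm : L - m ≠ 0 := sub_ne_zero.mpr hmL.ne'
  have hω0 : ω ≠ 0 := hω.ne'
  have hfe : f = fun x => (L - m) / 4 *
      ((L + m) / (L - m) * x ^ 2 + 2 / ω ^ 2 * Real.sin (ω * x) -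
        2 / ω * x * Real.cos (ω * x)) := funext hf
  -- key derivative fact
  have key : ∀ x : ℝ, HasDerivAt f
      ((L + m) / 2 * x + (L - m) / 2 * x * Real.sin (ω * x)) x := by
    intro x
    have hωx : HasDerivAt (fun x : ℝ => ω * x) ω x := by
      simpa using (hasDerivAt_id x).const_mul ω
    have hsin : HasDerivAt (fun x : ℝ => Real.sin (ω * x)) (Real.cos (ω * x) * ω) x :=
      (Real.hasDerivAt_sin (ω * x)).comp x hωx
    have hcos : HasDerivAt (fun x : ℝ => Real.cos (ω * x)) (-Real.sin (ω * x) * ω) x :=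
      (Real.hasDerivAt_cos (ω * x)).comp x hωx
    have hsq : HasDerivAt (fun x : ℝ => x ^ 2) (2 * x) x := by
      simpa using hasDerivAt_pow 2 x
    have H : HasDerivAt f ((L - m) / 4 *
        ((L + m) / (L - m) * (2 * x) + 2 / ω ^ 2 * (Real.cos (ω * x) * ω) -
          (2 / ω * Real.cos (ω * x) + 2 / ω * x * (-Real.sin (ω * x) * ω)))) x := by
      rw [hfe]
      have h1 := (hsq.const_mul ((L + m) / (L - m))).add (hsin.const_mul (2 / ω ^ 2))
      have h2 : HasDerivAt (fun x : ℝ => 2 / ω * x * Real.cos (ω * x))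
          (2 / ω * Real.cos (ω * x) + 2 / ω * x * (-Real.sin (ω * x) * ω)) x := by
        have hl : HasDerivAt (fun x : ℝ => 2 / ω * x) (2 / ω) x := by
          simpa using (hasDerivAt_id x).const_mul (2 / ω)
        exact hl.mul hcos
      exact ((h1.sub h2).const_mul ((L - m) / 4))
    convert H using 1
    field_simp
    ring
  have hdiff : Differentiable ℝ f := fun x => (key x).differentiableAt
  have hderiv : ∀ x : ℝ, deriv f x =
      (L + m) / 2 * x + (L - m) / 2 * x * Real.sin (ω * x) := fun x => (key x).deriv
  -- bounds on the "h" factor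
  have hb : ∀ x : ℝ, m ≤ (L + m) / 2 + (L - m) / 2 * Real.sin (ω * x) ∧
      (L + m) / 2 + (L - m) / 2 * Real.sin (ω * x) ≤ L := by
    intro x
    have h1 := Real.neg_one_le_sin (ω * x)
    have h2 := Real.sin_le_one (ω * x)
    constructor <;> nlinarith
  refine ⟨hdiff, hderiv, ?_, ?_, ?_⟩
  · -- minimum at 0
    intro x
    rcases le_or_gt 0 x with hx | hx
    · have hmono : MonotoneOn f (Set.Ici 0) := by
        apply monotoneOn_of_deriv_nonneg (convex_Ici 0) hdiff.continuous.continuousOn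
          (hdiff.differentiableOn.mono interior_subset)
        intro y hy
        rw [interior_Ici] at hy
        rw [hderiv]
        have := (hb y).1
        nlinarith [(Set.mem_Ioi.mp hy).le]
      exact hmono (Set.mem_Ici.mpr le_rfl) (Set.mem_Ici.mpr hx) hx
    · have hanti : AntitoneOn f (Set.Iic 0) := by
        apply antitoneOn_of_deriv_nonpos (convex_Iic 0) hdiff.continuous.continuousOn
          (hdiff.differentiableOn.mono interior_subset)
        intro y hy
        rw [interior_Iic] at hy
        rw [hderiv]
        have := (hb y).1
        nlinarith [(Set.mem_Iio.mp hy).le]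
      exact hanti (Set.mem_Iic.mpr hx.le) (Set.mem_Iic.mpr le_rfl) hx.le
  · -- sector condition
    intro x
    rw [hderiv]
    set s := Real.sin (ω * x) with hs
    have h1 := Real.neg_one_le_sin (ω * x)
    have h2 := Real.sin_le_one (ω * x)
    rw [← hs] at h1 h2
    have hexp : (m * x - ((L + m) / 2 * x + (L - m) / 2 * x * s)) *
        (L * x - ((L + m) / 2 * x + (L - m) / 2 * x * s)) =
        -(x ^ 2 * ((L - m) / 2) ^ 2 * ((1 - s) * (1 + s))) := by ring
    rw [hexp]
    have : 0 ≤ x ^ 2 * ((L - m) / 2) ^ 2 * ((1 - s) * (1 + s)) := by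
      apply mul_nonneg (mul_nonneg (sq_nonneg _) (sq_nonneg _))
      nlinarith
    linarith
  · -- not convex
    intro hconv
    have hmono : Monotone (deriv f) := by
      have := hconv.monotoneOn_deriv (fun x _ => hdiff x)
      intro a b hab
      exact this (Set.mem_univ a) (Set.mem_univ b) hab
    obtain ⟨k, hk⟩ := exists_nat_gt (m * π / ((L - m) * (2 * π)))
    have hπ := Real.pi_pos
    have hab : (π / 2 + 2 * k * π) / ω ≤ (π / 2 + 2 * k * π + π) / ω :=
      (div_le_div_iff_of_pos_right hω).mpr (by linarith)
    have hmono' := hmono hab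
    rw [hderiv, hderiv] at hmono'
    have hsa : Real.sin (ω * ((π / 2 + 2 * k * π) / ω)) = 1 := by
      have h : ω * ((π / 2 + 2 * (k:ℝ) * π) / ω) = π / 2 + ((k:ℤ):ℝ) * (2 * π) := by
        push_cast; field_simp
      rw [h, Real.sin_add_int_mul_two_pi, Real.sin_pi_div_two]
    have hsb : Real.sin (ω * ((π / 2 + 2 * k * π + π) / ω)) = -1 := by
      have h : ω * ((π / 2 + 2 * (k:ℝ) * π + π) / ω) = (π / 2 + π) + ((k:ℤ):ℝ) * (2 * π) := by
        push_cast; field_simp; ring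
      rw [h, Real.sin_add_int_mul_two_pi, Real.sin_add_pi, Real.sin_pi_div_two]
    rw [hsa, hsb] at hmono'
    have e1 : (π / 2 + 2 * (k:ℝ) * π) / ω * ω = π / 2 + 2 * k * π :=
      div_mul_cancel₀ _ hω0
    have e2 : (π / 2 + 2 * (k:ℝ) * π + π) / ω * ω = π / 2 + 2 * k * π + π :=
      div_mul_cancel₀ _ hω0
    have hk' : m * π < (L - m) * (2 * π) * k := by
      have h2π : 0 < (L - m) * (2 * π) := by nlinarith
      calc m * π = (L - m) * (2 * π) * (m * π / ((L - m) * (2 * π))) := by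
            field_simp
        _ < (L - m) * (2 * π) * k := by
            exact (mul_lt_mul_iff_right₀ h2π).mpr hk
    nlinarith [mul_le_mul_of_nonneg_right hmono' hω.le, e1, e2]
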